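/- arXiv:2410.22130 — 2 statements merged into one kernel-verified Lean document; each statement's English description precedes it below -/
import Mathlib

section
/- G₀(Π) is a generator program for Π: (1) for every worldview W of Π there is a stable model M of G₀(Π) with k(W) = k(M) and (M ∩ At(Π)) ∈ W; and (2) every stable model M of G₀(Π) and every set of interpretations W with k(W) = k(M) satisfy (M ∩ At(Π)) ∈ SM(Π^W). -/
/-! Framework for (epistemic) logic programs:
objective literals, rules, programs, reducts, stable models,
subjective literals, subjective reducts, worldviews, and the
generate-and-test programs T₀, G₀, kp, G₁. -/

/-- Extended objective literals over an atom type `α`: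
an atom, a negated atom, a doubly negated atom, or a truth constant. -/
inductive Lit (α : Type) : Type
  | pos (a : α)
  | neg (a : α)
  | nneg (a : α)
  | top
  | bot

namespace Lit

/-- Satisfaction of an extended objective literal by an interpretation. -/
def sat {α : Type} (I : Set α) : Lit α → Prop
  | .pos a => a ∈ I
  | .neg a => a ∉ I
  | .nneg a => a ∈ I
  | .top => True
  | .bot => False

/-- A literal is negated if it is of the form `¬a` or `¬¬a`. -/
def isNeg {α : Type} : Lit α → Prop
  | .neg _ => True
  | .nneg _ => True
  | _ => False

/-- Rename atoms in a literal. -/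
def map {α β : Type} (f : α → β) : Lit α → Lit β
  | .pos a => .pos (f a)
  | .neg a => .neg (f a)
  | .nneg a => .nneg (f a)
  | .top => .top
  | .bot => .bot

/-- The atoms occurring in a literal. -/
def atoms {α : Type} : Lit α → Set α
  | .pos a => {a}
  | .neg a => {a}
  | .nneg a => {a}
  | _ => ∅

end Lit

/-- An objective rule `a₁ ∨ ... ∨ aₙ ← L₁,...,Lₘ`. -/
structure Rule (α : Type) where
  head : Set α
  body : Set (Lit α)

/-- An objective program: a set of rules. -/
abbrev Program (α : Type) := Set (Rule α)

/-- A rule is satisfied by `I` if `I` satisfies some head atom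
whenever it satisfies all body literals. -/
def Rule.sat {α : Type} (I : Set α) (r : Rule α) : Prop :=
  (∀ L ∈ r.body, L.sat I) → ∃ a ∈ r.head, a ∈ I

/-- A model of a program satisfies all its rules. -/
def isModel {α : Type} (I : Set α) (P : Program α) : Prop := ∀ r ∈ P, r.sat I

/-- The reduct of a program with respect to `I`: drop rules with an unsatisfied
negated body literal; delete negated literals from the remaining rules. -/
def reduct {α : Type} (P : Program α) (I : Set α) : Program α :=
  { r' | ∃ r ∈ P, (∀ L ∈ r.body, L.isNeg → L.sat I) ∧
      r' = ⟨r.head, {L | L ∈ r.body ∧ ¬ L.isNeg}⟩ }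

/-- `I` is a stable model of `P` iff it is a ⊆-minimal model of the reduct `P^I`. -/
def isStable {α : Type} (P : Program α) (I : Set α) : Prop :=
  isModel I (reduct P I) ∧ ∀ J ⊆ I, isModel J (reduct P I) → J = I

/-- The set of stable models of a program. -/
def SM {α : Type} (P : Program α) : Set (Set α) := { I | isStable P I }

/-- A program extended with assumption constraints `⊥ ← ¬a` (for `a ∈ Apos`)
and `⊥ ← a` (for `a ∈ Aneg`). -/
def withAssumption {α : Type} (P : Program α) (Apos Aneg : Set α) : Program α :=
  P ∪ ((fun a => (⟨∅, {Lit.neg a}⟩ : Rule α)) '' Apos)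
    ∪ ((fun a => (⟨∅, {Lit.pos a}⟩ : Rule α)) '' Aneg)

/-- Stable models of `P` under an assumption. -/
def SMA {α : Type} (P : Program α) (Apos Aneg : Set α) : Set (Set α) :=
  SM (withAssumption P Apos Aneg)

/-- Literals of epistemic programs: an objective literal, or a subjective
atom `K l` preceded by zero, one, or two negations. -/
inductive SLit (α : Type) : Type
  | obj (l : Lit α)
  | k (l : Lit α)
  | nk (l : Lit α)
  | nnk (l : Lit α)

/-- An epistemic rule. -/
structure ERule (α : Type) where
  head : Set α
  body : Set (SLit α)

/-- An epistemic program: a set of epistemic rules. -/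
abbrev EProgram (α : Type) := Set (ERule α)

/-- `W ⊨ K l`: every interpretation in `W` satisfies `l`. -/
def satK {α : Type} (W : Set (Set α)) (l : Lit α) : Prop := ∀ I ∈ W, l.sat I

open scoped Classical in
/-- Replace a subjective literal by `⊤`/`⊥` according to `W`; objective
literals are unchanged. -/
noncomputable def SLit.reduce {α : Type} (W : Set (Set α)) : SLit α → Lit α
  | .obj l => l
  | .k l => if satK W l then .top else .bot
  | .nk l => if satK W l then .bot else .top
  | .nnk l => if satK W l then .top else .bot

/-- The subjective reduct `P^W`. -/
noncomputable def subjReduct {α : Type} (P : EProgram α) (W : Set (Set α)) : Program α :=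
  (fun r : ERule α => (⟨r.head, (SLit.reduce W) '' r.body⟩ : Rule α)) '' P

/-- A worldview: a non-empty set of interpretations `W` with `W = SM(P^W)`. -/
def isWorldview {α : Type} (P : EProgram α) (W : Set (Set α)) : Prop :=
  W.Nonempty ∧ W = SM (subjReduct P W)

/-- Normal-form subjective literals: `K a`, `¬K a`, `¬¬K a` with `a` an atom. -/
def SLit.isNormal {α : Type} : SLit α → Prop
  | .obj _ => True
  | .k (.pos _) => True
  | .nk (.pos _) => True
  | .nnk (.pos _) => True
  | _ => False

/-- A program is in normal form if negation does not occur in the scope of `K`. -/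
def isNormalForm {α : Type} (P : EProgram α) : Prop :=
  ∀ r ∈ P, ∀ L ∈ r.body, L.isNormal

/-- The atoms `a` such that a subjective atom `K a` occurs in the program; the
corresponding fresh atoms `ka` are represented as `Sum.inr a`. -/
def KAtoms {α : Type} (P : EProgram α) : Set α :=
  { a | ∃ r ∈ P, SLit.k (Lit.pos a) ∈ r.body ∨ SLit.nk (Lit.pos a) ∈ r.body ∨
        SLit.nnk (Lit.pos a) ∈ r.body }

/-- Replace subjective literals on `K a` by objective literals on the fresh
atom `ka = Sum.inr a`; original atoms become `Sum.inl a`. -/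
def SLit.t0 {α : Type} : SLit α → Lit (α ⊕ α)
  | .obj l => l.map Sum.inl
  | .k (.pos a) => .pos (Sum.inr a)
  | .nk (.pos a) => .neg (Sum.inr a)
  | .nnk (.pos a) => .nneg (Sum.inr a)
  | _ => .bot

/-- The tester program `T₀(P)`: `k(P)` plus a choice rule `{ka}`
(i.e. `ka ← ¬¬ka`) for each `ka ∈ K(P)`. -/
def T0 {α : Type} (P : EProgram α) : Program (α ⊕ α) :=
  ((fun r : ERule α => (⟨Sum.inl '' r.head, SLit.t0 '' r.body⟩ : Rule (α ⊕ α))) '' P)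
  ∪ ((fun a => (⟨{Sum.inr a}, {Lit.nneg (Sum.inr a)}⟩ : Rule (α ⊕ α))) '' KAtoms P)

/-- The generator program `G₀(P)`: `T₀(P)` plus consistency constraints
`⊥ ← ka, ¬a` for each `ka ∈ K(P)`. -/
def G0 {α : Type} (P : EProgram α) : Program (α ⊕ α) :=
  T0 P ∪ ((fun a => (⟨∅, {Lit.pos (Sum.inr a), Lit.neg (Sum.inl a)}⟩ : Rule (α ⊕ α))) '' KAtoms P)

/-- `k(M) = M ∩ K(P)`, read as a set of original atoms. -/
def kOfM {α : Type} (M : Set (α ⊕ α)) : Set α := { a | Sum.inr a ∈ M }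

/-- `k(W) = {ka ∈ K(P) : W ⊨ K a}`, read as a set of original atoms. -/
def kOfW {α : Type} (P : EProgram α) (W : Set (Set α)) : Set α :=
  { a | a ∈ KAtoms P ∧ ∀ I ∈ W, a ∈ I }

/-- Restriction of an interpretation to the original atoms `At(P)`. -/
def restr {α : Type} (M : Set (α ⊕ α)) : Set α := { a | Sum.inl a ∈ M }

/-- The positive part of the assumption determined by a set `S` of K-atoms:
`ka` for each `ka ∈ K(P)` with `a ∈ S`. -/
def asmP {α : Type} (P : EProgram α) (S : Set α) : Set (α ⊕ α) := Sum.inr '' (S ∩ KAtoms P)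

/-- The negative part of the assumption determined by a set `S` of K-atoms:
`¬ka` for each `ka ∈ K(P)` with `a ∉ S`. -/
def asmN {α : Type} (P : EProgram α) (S : Set α) : Set (α ⊕ α) := Sum.inr '' (KAtoms P \ S)

/-- A generator program for `P`. -/
def isGenerator {α : Type} (P : EProgram α) (G : Program (α ⊕ α)) : Prop :=
  (∀ W, isWorldview P W → ∃ M ∈ SM G, kOfM M = kOfW P W ∧ restr M ∈ W) ∧
  (∀ M ∈ SM G, ∀ W : Set (Set α), kOfW P W = kOfM M → restr M ∈ SM (subjReduct P W))

/-- A tester program for `P`: a non-empty `W` is a worldview of `P` iff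
`W` equals the restriction to `At(P)` of `SM(T; k(W))`. -/
def isTester {α : Type} (P : EProgram α) (T : Program (α ⊕ α)) : Prop :=
  ∀ W : Set (Set α), W.Nonempty →
    (isWorldview P W ↔ W = restr '' SMA T (asmP P (kOfW P W)) (asmN P (kOfW P W)))

/-- Atoms of the extended signature for the propagation program: original
atoms and `ka`-atoms (left) plus fresh atoms `kp_a`, `kn_a`, `kn_r` (right). -/
abbrev PExt (α : Type) : Type := (α ⊕ α) ⊕ (α ⊕ (α ⊕ ERule α))

/-- An original atom `a` in the extended signature. -/
def aE {α : Type} (a : α) : PExt α := Sum.inl (Sum.inl a)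

/-- The atom `ka` in the extended signature. -/
def kaE {α : Type} (a : α) : PExt α := Sum.inl (Sum.inr a)

/-- The fresh propagation atom `kp_a`. -/
def kpA {α : Type} (a : α) : PExt α := Sum.inr (Sum.inl a)

/-- The fresh propagation atom `kn_a`. -/
def knA {α : Type} (a : α) : PExt α := Sum.inr (Sum.inr (Sum.inl a))

/-- The fresh propagation atom `kn_r` for a rule `r`. -/
def knR {α : Type} (r : ERule α) : PExt α := Sum.inr (Sum.inr (Sum.inr r))

/-- Translation of a body literal for the rules defining `kp_a`. -/
def SLit.kpBody {α : Type} : SLit α → Lit (PExt α)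
  | .obj (.pos a) => .pos (kpA a)
  | .obj (.neg a) => .pos (knA a)
  | .k (.pos a) => .pos (kaE a)
  | .nk (.pos a) => .neg (kaE a)
  | .nnk (.pos a) => .nneg (kaE a)
  | _ => .bot

/-- Translation of a body literal for the rules defining `kn_r`
(the "complement" of the literal). -/
def SLit.knBody {α : Type} : SLit α → Lit (PExt α)
  | .obj (.pos a) => .pos (knA a)
  | .obj (.neg a) => .pos (kpA a)
  | .k (.pos a) => .neg (kaE a)
  | .nk (.pos a) => .pos (kaE a)
  | .nnk (.pos a) => .neg (kaE a)
  | _ => .top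

/-- The atoms occurring in a subjective literal. -/
def SLit.atoms {α : Type} : SLit α → Set α
  | .obj l => l.atoms
  | .k l => l.atoms
  | .nk l => l.atoms
  | .nnk l => l.atoms

/-- The atoms occurring in an epistemic program. -/
def AtE {α : Type} (P : EProgram α) : Set α :=
  { a | ∃ r ∈ P, a ∈ r.head ∨ ∃ L ∈ r.body, a ∈ L.atoms }

/-- The epistemic-propagation program `kp(P)`:
rules `kp_{a} ← ...` for single-atom-head rules, rules `kn_r ← ...` for all
rules, and completion rules `kn_a ← kn_{r₁},...,kn_{rₖ}`. -/
def kpProg {α : Type} (P : EProgram α) : Program (PExt α) :=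
  { r' | ∃ r ∈ P, ∃ a : α, r.head = {a} ∧ r' = ⟨{kpA a}, SLit.kpBody '' r.body⟩ }
  ∪ { r' | ∃ r ∈ P, ∃ L ∈ r.body, r' = ⟨{knR r}, {L.knBody}⟩ }
  ∪ { r' | ∃ a ∈ AtE P,
        r' = ⟨{knA a}, (fun r => Lit.pos (knR r)) '' { r ∈ P | a ∈ r.head }⟩ }

/-- Rename the atoms of a rule. -/
def Rule.mapAtoms {α β : Type} (f : α → β) (r : Rule α) : Rule β :=
  ⟨f '' r.head, (Lit.map f) '' r.body⟩

/-- `G₀(P)` viewed over the extended signature. -/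
def G0ext {α : Type} (P : EProgram α) : Program (PExt α) :=
  (Rule.mapAtoms Sum.inl) '' (G0 P)

/-- The generator program `G₁(P)`: `G₀(P)` together with the propagation
program `kp(P)` and consistency constraints `⊥ ← kp_a, ¬ka`. -/
def G1 {α : Type} (P : EProgram α) : Program (PExt α) :=
  G0ext P ∪ kpProg P
  ∪ { r' | ∃ a ∈ KAtoms P, r' = ⟨∅, {Lit.pos (kpA a), Lit.neg (kaE a)}⟩ }

section AuxG0

variable {α : Type}

/-- Lift an interpretation over original atoms to the extended signature,
keeping the `ka`-part of `M`. -/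
def liftI (M : Set (α ⊕ α)) (J' : Set α) : Set (α ⊕ α) :=
  Sum.inl '' J' ∪ (M ∩ Set.range Sum.inr)

lemma mem_liftI_inl {M : Set (α ⊕ α)} {J' : Set α} {a : α} :
    Sum.inl a ∈ liftI M J' ↔ a ∈ J' := by
  simp [liftI]

lemma mem_liftI_inr {M : Set (α ⊕ α)} {J' : Set α} {a : α} :
    Sum.inr a ∈ liftI M J' ↔ Sum.inr a ∈ M := by
  simp [liftI]

lemma liftI_restr (M : Set (α ⊕ α)) : liftI M (restr M) = M := by
  ext x
  cases x with
  | inl a => simp [mem_liftI_inl, restr]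
  | inr a => simp [mem_liftI_inr]

lemma isModel_reduct_iff {Q : Program α} {I J : Set α} :
    isModel J (reduct Q I) ↔
      ∀ r ∈ Q, (∀ L ∈ r.body, (L.isNeg → L.sat I) ∧ (¬ L.isNeg → L.sat J)) →
        ∃ a ∈ r.head, a ∈ J := by
  constructor
  · intro h r hr hall
    exact h ⟨r.head, {L | L ∈ r.body ∧ ¬ L.isNeg}⟩ ⟨r, hr, fun L hL => (hall L hL).1, rfl⟩
      (fun L hL => (hall L hL.1).2 hL.2)
  · rintro h r' ⟨r, hr, hkept, rfl⟩ hbody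
    exact h r hr (fun L hL => ⟨hkept L hL, fun hn => hbody L ⟨hL, hn⟩⟩)

/-- The condition that a translated rule of `P` is satisfied (through the
objective reduct w.r.t. `M`) by `J`. -/
def trCond (M J : Set (α ⊕ α)) (r : ERule α) : Prop :=
  (∀ L ∈ r.body, ((SLit.t0 L).isNeg → (SLit.t0 L).sat M) ∧
      (¬ (SLit.t0 L).isNeg → (SLit.t0 L).sat J)) → ∃ a ∈ r.head, Sum.inl a ∈ J

/-- The condition that a rule of the subjective reduct is satisfied
(through the objective reduct w.r.t. `I'`) by `J'`. -/
def subjCond (W : Set (Set α)) (I' J' : Set α) (r : ERule α) : Prop :=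
  (∀ L ∈ r.body, ((SLit.reduce W L).isNeg → (SLit.reduce W L).sat I') ∧
      (¬ (SLit.reduce W L).isNeg → (SLit.reduce W L).sat J')) → ∃ a ∈ r.head, a ∈ J'

lemma modelG0_iff {P : EProgram α} {M J : Set (α ⊕ α)} :
    isModel J (reduct (G0 P) M) ↔
      (∀ r ∈ P, trCond M J r) ∧
      (∀ a ∈ KAtoms P, Sum.inr a ∈ M → Sum.inr a ∈ J) ∧
      (∀ a ∈ KAtoms P, Sum.inl a ∉ M → Sum.inr a ∉ J) := by
  rw [isModel_reduct_iff]
  constructor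
  · intro h
    refine ⟨?_, ?_, ?_⟩
    · intro r hr hall
      have hmem : (⟨Sum.inl '' r.head, SLit.t0 '' r.body⟩ : Rule (α ⊕ α)) ∈ G0 P :=
        Or.inl (Or.inl ⟨r, hr, rfl⟩)
      obtain ⟨x, hx, hxJ⟩ := h _ hmem (by
        rintro L ⟨L0, hL0, rfl⟩
        exact hall L0 hL0)
      obtain ⟨a, ha, rfl⟩ := hx
      exact ⟨a, ha, hxJ⟩
    · intro a ha haM
      have hmem : (⟨{Sum.inr a}, {Lit.nneg (Sum.inr a)}⟩ : Rule (α ⊕ α)) ∈ G0 P :=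
        Or.inl (Or.inr ⟨a, ha, rfl⟩)
      obtain ⟨x, hx, hxJ⟩ := h _ hmem (by
        rintro L hL
        rw [Set.mem_singleton_iff] at hL
        subst hL
        exact ⟨fun _ => haM, fun hn => absurd trivial hn⟩)
      rw [Set.mem_singleton_iff] at hx
      subst hx
      exact hxJ
    · intro a ha haM haJ
      have hmem : (⟨∅, {Lit.pos (Sum.inr a), Lit.neg (Sum.inl a)}⟩ : Rule (α ⊕ α)) ∈ G0 P :=
        Or.inr ⟨a, ha, rfl⟩
      obtain ⟨x, hx, -⟩ := h _ hmem (by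
        rintro L hL
        rcases hL with hL | hL
        · subst hL
          exact ⟨fun hn => hn.elim, fun _ => haJ⟩
        · rw [Set.mem_singleton_iff] at hL
          subst hL
          exact ⟨fun _ => haM, fun hn => absurd trivial hn⟩)
      exact hx
  · rintro ⟨h1, h2, h3⟩ r' hmem hall
    rcases hmem with (⟨r, hr, rfl⟩ | ⟨a, ha, rfl⟩) | ⟨a, ha, rfl⟩
    · obtain ⟨x, hx, hxJ⟩ := h1 r hr (fun L hL => hall _ ⟨L, hL, rfl⟩)
      exact ⟨Sum.inl x, ⟨x, hx, rfl⟩, hxJ⟩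
    · have := (hall (Lit.nneg (Sum.inr a)) rfl).1 trivial
      exact ⟨Sum.inr a, rfl, h2 a ha this⟩
    · have hpos := (hall (Lit.pos (Sum.inr a)) (Or.inl rfl)).2 (fun h => h)
      have hneg := (hall (Lit.neg (Sum.inl a)) (Or.inr rfl)).1 trivial
      exact absurd hpos (h3 a ha hneg)

lemma modelSubj_iff {P : EProgram α} {W : Set (Set α)} {I' J' : Set α} :
    isModel J' (reduct (subjReduct P W) I') ↔ ∀ r ∈ P, subjCond W I' J' r := by
  rw [isModel_reduct_iff]
  constructor
  · intro h r hr hall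
    exact h ⟨r.head, SLit.reduce W '' r.body⟩ ⟨r, hr, rfl⟩ (by
      rintro L ⟨L0, hL0, rfl⟩
      exact hall L0 hL0)
  · rintro h r' ⟨r, hr, rfl⟩ hall
    exact h r hr (fun L hL => hall _ ⟨L, hL, rfl⟩)

lemma katom_of_mem {P : EProgram α} {r : ERule α} (hr : r ∈ P) {L : SLit α}
    (hL : L ∈ r.body) (a : α)
    (h : L = .k (.pos a) ∨ L = .nk (.pos a) ∨ L = .nnk (.pos a)) : a ∈ KAtoms P :=
  ⟨r, hr, by rcases h with h | h | h <;> subst h <;> tauto⟩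

lemma lit_equiv {W : Set (Set α)} {M : Set (α ⊕ α)} {J' : Set α}
    (L : SLit α) (hn : L.isNormal)
    (hK : ∀ a, (L = .k (.pos a) ∨ L = .nk (.pos a) ∨ L = .nnk (.pos a)) →
        (satK W (Lit.pos a) ↔ Sum.inr a ∈ M)) :
    (((SLit.t0 L).isNeg → (SLit.t0 L).sat M) ∧
      (¬ (SLit.t0 L).isNeg → (SLit.t0 L).sat (liftI M J')))
    ↔ (((SLit.reduce W L).isNeg → (SLit.reduce W L).sat (restr M)) ∧
       (¬ (SLit.reduce W L).isNeg → (SLit.reduce W L).sat J')) := by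
  classical
  cases L with
  | obj l =>
    cases l <;>
      simp [SLit.t0, SLit.reduce, Lit.map, Lit.isNeg, Lit.sat, restr, mem_liftI_inl]
  | k l =>
    cases l with
    | pos a =>
      have h := hK a (Or.inl rfl)
      by_cases hs : satK W (Lit.pos a)
      · simp [SLit.t0, SLit.reduce, hs, Lit.isNeg, Lit.sat, mem_liftI_inr, h.mp hs]
      · have : Sum.inr a ∉ M := fun hm => hs (h.mpr hm)
        simp [SLit.t0, SLit.reduce, hs, Lit.isNeg, Lit.sat, mem_liftI_inr, this]
    | neg a => exact hn.elim
    | nneg a => exact hn.elim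
    | top => exact hn.elim
    | bot => exact hn.elim
  | nk l =>
    cases l with
    | pos a =>
      have h := hK a (Or.inr (Or.inl rfl))
      by_cases hs : satK W (Lit.pos a)
      · simp [SLit.t0, SLit.reduce, hs, Lit.isNeg, Lit.sat, h.mp hs]
      · have : Sum.inr a ∉ M := fun hm => hs (h.mpr hm)
        simp [SLit.t0, SLit.reduce, hs, Lit.isNeg, Lit.sat, this]
    | neg a => exact hn.elim
    | nneg a => exact hn.elim
    | top => exact hn.elim
    | bot => exact hn.elim
  | nnk l =>
    cases l with
    | pos a =>
      have h := hK a (Or.inr (Or.inr rfl))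
      by_cases hs : satK W (Lit.pos a)
      · simp [SLit.t0, SLit.reduce, hs, Lit.isNeg, Lit.sat, h.mp hs]
      · have : Sum.inr a ∉ M := fun hm => hs (h.mpr hm)
        simp [SLit.t0, SLit.reduce, hs, Lit.isNeg, Lit.sat, this]
    | neg a => exact hn.elim
    | nneg a => exact hn.elim
    | top => exact hn.elim
    | bot => exact hn.elim

lemma trCond_equiv {P : EProgram α} {W : Set (Set α)} {M : Set (α ⊕ α)} {J' : Set α}
    (hnf : isNormalForm P)
    (hKW : ∀ a ∈ KAtoms P, (satK W (Lit.pos a) ↔ Sum.inr a ∈ M))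
    {r : ERule α} (hr : r ∈ P) :
    trCond M (liftI M J') r ↔ subjCond W (restr M) J' r := by
  have hl : ∀ L ∈ r.body,
      (((SLit.t0 L).isNeg → (SLit.t0 L).sat M) ∧
        (¬ (SLit.t0 L).isNeg → (SLit.t0 L).sat (liftI M J')))
      ↔ (((SLit.reduce W L).isNeg → (SLit.reduce W L).sat (restr M)) ∧
         (¬ (SLit.reduce W L).isNeg → (SLit.reduce W L).sat J')) :=
    fun L hL => lit_equiv L (hnf r hr L hL) (fun a h => hKW a (katom_of_mem hr hL a h))
  constructor
  · intro h hall
    obtain ⟨a, ha, haJ⟩ := h (fun L hL => (hl L hL).mpr (hall L hL))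
    exact ⟨a, ha, mem_liftI_inl.mp haJ⟩
  · intro h hall
    obtain ⟨a, ha, haJ⟩ := h (fun L hL => (hl L hL).mp (hall L hL))
    exact ⟨a, ha, mem_liftI_inl.mpr haJ⟩

end AuxG0
/-- `G₀(Π)` is a generator program for `Π`. -/
theorem G0_is_generator {α : Type} (P : EProgram α) (hfin : P.Finite)
    (hnf : isNormalForm P) :
    (∀ W : Set (Set α), isWorldview P W →
        ∃ M ∈ SM (G0 P), kOfM M = kOfW P W ∧ restr M ∈ W)
    ∧ (∀ M ∈ SM (G0 P), ∀ W : Set (Set α),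
        kOfW P W = kOfM M → restr M ∈ SM (subjReduct P W)) := by
  constructor
  · -- Part 1
    rintro W ⟨⟨I, hIW⟩, hWeq⟩
    have hIst : isStable (subjReduct P W) I := by
      have := hIW; rw [hWeq] at this; exact this
    set S := kOfW P W with hS
    set M : Set (α ⊕ α) := Sum.inl '' I ∪ Sum.inr '' S with hMdef
    have hinr : ∀ a : α, Sum.inr a ∈ M ↔ a ∈ S := by
      intro a; simp [hMdef]
    have hinl : ∀ a : α, Sum.inl a ∈ M ↔ a ∈ I := by
      intro a; simp [hMdef]
    have hrestr : restr M = I := by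
      ext a; exact hinl a
    have hSK : ∀ a ∈ S, a ∈ KAtoms P := fun a ha => ha.1
    have hSI : ∀ a ∈ S, a ∈ I := fun a ha => ha.2 I hIW
    have hKW : ∀ a ∈ KAtoms P, (satK W (Lit.pos a) ↔ Sum.inr a ∈ M) := by
      intro a ha
      rw [hinr]
      constructor
      · intro hsat; exact ⟨ha, fun J hJ => hsat J hJ⟩
      · intro hs J hJ; exact hs.2 J hJ
    have hliftI : liftI M I = M := by
      rw [← hrestr, liftI_restr]
    refine ⟨M, ⟨?_, ?_⟩, ?_, ?_⟩
    · -- M is a model of the reduct of G0 P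
      rw [modelG0_iff]
      refine ⟨?_, fun a _ h => h, ?_⟩
      · intro r hr
        have h := (modelSubj_iff.mp hIst.1) r hr
        have := (trCond_equiv (J' := I) hnf hKW hr)
        rw [hliftI, hrestr] at this
        exact this.mpr h
      · intro a ha hla hin
        exact hla ((hinl a).mpr (hSI a ((hinr a).mp hin)))
    · -- minimality
      intro J hJM hJmod
      rw [modelG0_iff] at hJmod
      obtain ⟨h1, h2, h3⟩ := hJmod
      set J' : Set α := {a | Sum.inl a ∈ J} with hJ'def
      have hJ'I : J' ⊆ I := fun a ha => (hinl a).mp (hJM ha)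
      have hJlift : J = liftI M J' := by
        ext x
        cases x with
        | inl a => rw [mem_liftI_inl]; exact Iff.rfl
        | inr a =>
          rw [mem_liftI_inr]
          constructor
          · intro h; exact hJM h
          · intro h; exact h2 a (hSK a ((hinr a).mp h)) h
      have hJ'mod : isModel J' (reduct (subjReduct P W) I) := by
        rw [modelSubj_iff]
        intro r hr
        have := (trCond_equiv (J' := J') hnf hKW hr)
        rw [hrestr] at this
        exact this.mp (by rw [← hJlift]; exact h1 r hr)
      have : J' = I := hIst.2 J' hJ'I hJ'mod
      rw [hJlift, this, hliftI]
    · -- kOfM M = kOfW P W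
      ext a
      exact (hinr a)
    · rw [hrestr]; exact hIW
  · -- Part 2
    rintro M ⟨hMmod, hMmin⟩ W hkeq
    obtain ⟨h1, h2, h3⟩ := modelG0_iff.mp hMmod
    have hinrK : ∀ a : α, Sum.inr a ∈ M → a ∈ KAtoms P := by
      intro a ha
      have : a ∈ kOfW P W := by rw [hkeq]; exact ha
      exact this.1
    have hKW : ∀ a ∈ KAtoms P, (satK W (Lit.pos a) ↔ Sum.inr a ∈ M) := by
      intro a ha
      constructor
      · intro hsat
        have : a ∈ kOfW P W := ⟨ha, fun J hJ => hsat J hJ⟩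
        rw [hkeq] at this; exact this
      · intro hm J hJ
        have : a ∈ kOfW P W := by rw [hkeq]; exact hm
        exact this.2 J hJ
    have hconM : ∀ a : α, Sum.inr a ∈ M → Sum.inl a ∈ M := by
      intro a ha
      by_contra hla
      exact h3 a (hinrK a ha) hla ha
    constructor
    · -- restr M is a model
      rw [modelSubj_iff]
      intro r hr
      have := (trCond_equiv (J' := restr M) hnf hKW hr)
      rw [liftI_restr] at this
      exact this.mp (h1 r hr)
    · -- minimality
      intro J' hJ' hJ'mod
      set J : Set (α ⊕ α) := liftI M J' with hJdef
      have hJM : J ⊆ M := by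
        rintro x (⟨a, ha, rfl⟩ | hx)
        · exact hJ' ha
        · exact hx.1
      have hJmod : isModel J (reduct (G0 P) M) := by
        rw [modelG0_iff]
        refine ⟨?_, ?_, ?_⟩
        · intro r hr
          have := (trCond_equiv (J' := J') hnf hKW hr)
          exact this.mpr ((modelSubj_iff.mp hJ'mod) r hr)
        · intro a _ ha; exact mem_liftI_inr.mpr ha
        · intro a _ hla hin
          exact hla (hconM a (mem_liftI_inr.mp hin))
      have hJeq : J = M := hMmin J hJM hJmod
      apply Set.Subset.antisymm hJ'
      intro a ha
      have : Sum.inl a ∈ J := by rw [hJeq]; exact ha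
      exact mem_liftI_inl.mp this
end

section
/- There is a one-to-one correspondence between the worldviews of an epistemic program Π and the worldviews of its normal form NF(Π): W is a worldview of NF(Π) if and only if the restriction of W to At(Π) is a worldview of Π, and this restriction map is injective on worldviews of NF(Π). -/
/-- Atom signature for the normal form: original atoms (`Sum.inl a`), fresh
atoms `n_a` (`Sum.inr (Sum.inl a)`) and `nn_a` (`Sum.inr (Sum.inr a)`). -/
abbrev NFAt (α : Type) : Type := α ⊕ (α ⊕ α)

/-- Transformation of the literal inside a subjective operator:
`¬a` becomes `n_a` and `¬¬a` becomes `nn_a`. -/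
def innerNF {α : Type} : Lit α → Lit (NFAt α)
  | .neg a => .pos (Sum.inr (Sum.inl a))
  | .nneg a => .pos (Sum.inr (Sum.inr a))
  | l => l.map Sum.inl

/-- Normal-form transformation of a body literal. -/
def nfSLit {α : Type} : SLit α → SLit (NFAt α)
  | .obj l => .obj (l.map Sum.inl)
  | .k l => .k (innerNF l)
  | .nk l => .nk (innerNF l)
  | .nnk l => .nnk (innerNF l)

/-- `K ¬a` occurs (possibly under negations) in the program. -/
def negKOccurs {α : Type} (P : EProgram α) (a : α) : Prop :=
  ∃ r ∈ P, ∃ L ∈ r.body,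
    L = SLit.k (Lit.neg a) ∨ L = SLit.nk (Lit.neg a) ∨ L = SLit.nnk (Lit.neg a)

/-- `K ¬¬a` occurs (possibly under negations) in the program. -/
def nnegKOccurs {α : Type} (P : EProgram α) (a : α) : Prop :=
  ∃ r ∈ P, ∃ L ∈ r.body,
    L = SLit.k (Lit.nneg a) ∨ L = SLit.nk (Lit.nneg a) ∨ L = SLit.nnk (Lit.nneg a)

/-- The normal form `NF(Π)`: replace `K¬a` by `K n_a` (adding `n_a ← ¬a`) and
`K¬¬a` by `K nn_a` (adding `nn_a ← ¬¬a`). -/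
def NF {α : Type} (P : EProgram α) : EProgram (NFAt α) :=
  ((fun r : ERule α => (⟨Sum.inl '' r.head, nfSLit '' r.body⟩ : ERule (NFAt α))) '' P)
  ∪ { r' | ∃ a : α, negKOccurs P a ∧
        r' = ⟨{Sum.inr (Sum.inl a)}, {SLit.obj (Lit.neg (Sum.inl a))}⟩ }
  ∪ { r' | ∃ a : α, nnegKOccurs P a ∧
        r' = ⟨{Sum.inr (Sum.inr a)}, {SLit.obj (Lit.nneg (Sum.inl a))}⟩ }

/-- Restriction of a set of interpretations over `NFAt α` to the original atoms. -/
def restrNF {α : Type} (W : Set (Set (NFAt α))) : Set (Set α) :=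
  (fun I => { a : α | Sum.inl a ∈ I }) '' W

/-! ### Auxiliary development for the normal-form correspondence -/

section NFAux

variable {α : Type}

/-- Canonical extension of an interpretation of `Π` to the normal-form signature. -/
def extI (P : EProgram α) (J : Set α) : Set (NFAt α) :=
  {x | match x with
       | Sum.inl a => a ∈ J
       | Sum.inr (Sum.inl a) => negKOccurs P a ∧ a ∉ J
       | Sum.inr (Sum.inr a) => nnegKOccurs P a ∧ a ∈ J}

/-- Restriction of an interpretation to original atoms. -/
def restrI (I : Set (NFAt α)) : Set α := {a | Sum.inl a ∈ I}

lemma restrNF_eq (W : Set (Set (NFAt α))) : restrNF W = restrI '' W := rfl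

lemma restr_ext (P : EProgram α) (J : Set α) : restrI (extI P J) = J :=
  Set.ext fun _ => Iff.rfl

/-- The fresh rules of `NF P` after subjective reduction. -/
def freshP (P : EProgram α) : Program (NFAt α) :=
  { r' | ∃ a, negKOccurs P a ∧
      r' = ⟨{Sum.inr (Sum.inl a)}, {Lit.neg (Sum.inl a)}⟩ }
  ∪ { r' | ∃ a, nnegKOccurs P a ∧
      r' = ⟨{Sum.inr (Sum.inr a)}, {Lit.nneg (Sum.inl a)}⟩ }

open scoped Classical in
/-- Reduction of a body literal of `P` determined by `W` over the NF signature. -/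
noncomputable def gLit (W : Set (Set (NFAt α))) : SLit α → Lit α
  | .obj l => l
  | .k l => if satK W (innerNF l) then .top else .bot
  | .nk l => if satK W (innerNF l) then .bot else .top
  | .nnk l => if satK W (innerNF l) then .top else .bot

/-- The original-atom part of the subjective reduct of `NF P` w.r.t. `W`. -/
noncomputable def QW (P : EProgram α) (W : Set (Set (NFAt α))) : Program α :=
  (fun r : ERule α => (⟨r.head, gLit W '' r.body⟩ : Rule α)) '' P

lemma reduce_nf (W : Set (Set (NFAt α))) (L : SLit α) :
    SLit.reduce W (nfSLit L) = Lit.map Sum.inl (gLit W L) := by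
  cases L with
  | obj l => cases l <;> rfl
  | k l => simp only [nfSLit, SLit.reduce, gLit]; split <;> rfl
  | nk l => simp only [nfSLit, SLit.reduce, gLit]; split <;> rfl
  | nnk l => simp only [nfSLit, SLit.reduce, gLit]; split <;> rfl

lemma subjReduct_NF (P : EProgram α) (W : Set (Set (NFAt α))) :
    subjReduct (NF P) W = Rule.mapAtoms Sum.inl '' QW P W ∪ freshP P := by
  unfold subjReduct NF QW freshP
  rw [Set.image_union, Set.image_union, Set.union_assoc]
  congr 1
  · rw [Set.image_image, Set.image_image]
    apply Set.image_congr
    intro r _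
    simp only [Rule.mapAtoms]
    congr 1
    rw [Set.image_image, Set.image_image]
    exact Set.image_congr fun L _ => reduce_nf W L
  congr 1
  · ext r'
    simp only [Set.mem_image, Set.mem_setOf_eq]
    constructor
    · rintro ⟨r, ⟨a, ha, rfl⟩, rfl⟩
      refine ⟨a, ha, ?_⟩
      congr 1
      rw [Set.image_singleton]
      rfl
    · rintro ⟨a, ha, rfl⟩
      refine ⟨⟨{Sum.inr (Sum.inl a)}, {SLit.obj (Lit.neg (Sum.inl a))}⟩, ⟨a, ha, rfl⟩, ?_⟩
      congr 1
      rw [Set.image_singleton]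
      rfl
  · ext r'
    simp only [Set.mem_image, Set.mem_setOf_eq]
    constructor
    · rintro ⟨r, ⟨a, ha, rfl⟩, rfl⟩
      refine ⟨a, ha, ?_⟩
      congr 1
      rw [Set.image_singleton]
      rfl
    · rintro ⟨a, ha, rfl⟩
      refine ⟨⟨{Sum.inr (Sum.inr a)}, {SLit.obj (Lit.nneg (Sum.inl a))}⟩, ⟨a, ha, rfl⟩, ?_⟩
      congr 1
      rw [Set.image_singleton]
      rfl

lemma map_inl_sat (l : Lit α) (I : Set (NFAt α)) :
    (l.map Sum.inl).sat I ↔ l.sat (restrI I) := by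
  cases l <;> exact Iff.rfl

lemma map_isNeg {β : Type} (f : α → β) (l : Lit α) : (l.map f).isNeg ↔ l.isNeg := by
  cases l <;> exact Iff.rfl

lemma reduct_union (Q Q' : Program α) (I : Set α) :
    reduct (Q ∪ Q') I = reduct Q I ∪ reduct Q' I := by
  ext r'
  simp only [reduct, Set.mem_union, Set.mem_setOf_eq]
  constructor
  · rintro ⟨r, hr | hr, h1, h2⟩
    · exact Or.inl ⟨r, hr, h1, h2⟩
    · exact Or.inr ⟨r, hr, h1, h2⟩
  · rintro (⟨r, hr, h1, h2⟩ | ⟨r, hr, h1, h2⟩)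
    · exact ⟨r, Or.inl hr, h1, h2⟩
    · exact ⟨r, Or.inr hr, h1, h2⟩

lemma isModel_union {I : Set α} {Q1 Q2 : Program α} :
    isModel I (Q1 ∪ Q2) ↔ isModel I Q1 ∧ isModel I Q2 := by
  constructor
  · intro h
    exact ⟨fun r hr => h r (Or.inl hr), fun r hr => h r (Or.inr hr)⟩
  · rintro ⟨h1, h2⟩ r (hr | hr)
    · exact h1 r hr
    · exact h2 r hr

lemma isModel_mapped_reduct (Q : Program α) (I J : Set (NFAt α)) :
    isModel J (reduct (Rule.mapAtoms Sum.inl '' Q) I) ↔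
      isModel (restrI J) (reduct Q (restrI I)) := by
  constructor
  · intro h r'' hr''
    obtain ⟨r, hr, hcond, rfl⟩ := hr''
    intro hbody
    have hmem : (⟨(Rule.mapAtoms Sum.inl r).head,
        {L | L ∈ (Rule.mapAtoms Sum.inl r).body ∧ ¬ L.isNeg}⟩ : Rule (NFAt α)) ∈
        reduct (Rule.mapAtoms Sum.inl '' Q) I := by
      refine ⟨Rule.mapAtoms Sum.inl r, ⟨r, hr, rfl⟩, ?_, rfl⟩
      rintro L ⟨l, hl, rfl⟩ hneg
      exact (map_inl_sat l I).mpr (hcond l hl ((map_isNeg _ l).mp hneg))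
    have hpre : ∀ L ∈ {L | L ∈ (Rule.mapAtoms Sum.inl r).body ∧ ¬ L.isNeg}, L.sat J := by
      rintro L ⟨⟨l, hl, rfl⟩, hneg⟩
      exact (map_inl_sat l J).mpr
        (hbody l ⟨hl, fun hn => hneg ((map_isNeg _ l).mpr hn)⟩)
    obtain ⟨x, ⟨a, ha, rfl⟩, hx⟩ := h _ hmem hpre
    exact ⟨a, ha, hx⟩
  · intro h r'' hr''
    obtain ⟨r', ⟨r, hr, rfl⟩, hcond, rfl⟩ := hr''
    intro hbody
    have hmem : (⟨r.head, {L | L ∈ r.body ∧ ¬ L.isNeg}⟩ : Rule α) ∈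
        reduct Q (restrI I) := by
      refine ⟨r, hr, ?_, rfl⟩
      intro l hl hneg
      exact (map_inl_sat l I).mp
        (hcond (l.map Sum.inl) ⟨l, hl, rfl⟩ ((map_isNeg _ l).mpr hneg))
    have hpre : ∀ l ∈ {L | L ∈ r.body ∧ ¬ L.isNeg}, Lit.sat (restrI J) l := by
      rintro l ⟨hl, hneg⟩
      exact (map_inl_sat l J).mp
        (hbody (l.map Sum.inl) ⟨⟨l, hl, rfl⟩, fun hn => hneg ((map_isNeg _ l).mp hn)⟩)
    obtain ⟨a, ha, hx⟩ := h _ hmem hpre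
    exact ⟨Sum.inl a, ⟨a, ha, rfl⟩, hx⟩

lemma isModel_fresh_reduct (P : EProgram α) (I J : Set (NFAt α)) :
    isModel J (reduct (freshP P) I) ↔
      ((∀ a, negKOccurs P a → Sum.inl a ∉ I → Sum.inr (Sum.inl a) ∈ J) ∧
       (∀ a, nnegKOccurs P a → Sum.inl a ∈ I → Sum.inr (Sum.inr a) ∈ J)) := by
  constructor
  · intro h
    constructor
    · intro a ha hI
      have hmem : (⟨{Sum.inr (Sum.inl a)},
          {L | L ∈ ({Lit.neg (Sum.inl a)} : Set (Lit (NFAt α))) ∧ ¬ L.isNeg}⟩ :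
            Rule (NFAt α)) ∈ reduct (freshP P) I := by
        refine ⟨⟨{Sum.inr (Sum.inl a)}, {Lit.neg (Sum.inl a)}⟩,
          Or.inl ⟨a, ha, rfl⟩, ?_, rfl⟩
        rintro L hL _
        rw [Set.mem_singleton_iff] at hL
        subst hL
        exact hI
      have hpre : ∀ L ∈ {L | L ∈ ({Lit.neg (Sum.inl a)} : Set (Lit (NFAt α))) ∧ ¬ L.isNeg},
          L.sat J := by
        rintro L ⟨hL, hneg⟩
        rw [Set.mem_singleton_iff] at hL
        subst hL
        exact absurd trivial hneg
      obtain ⟨x, hx, hxJ⟩ := h _ hmem hpre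
      rw [Set.mem_singleton_iff] at hx
      subst hx
      exact hxJ
    · intro a ha hI
      have hmem : (⟨{Sum.inr (Sum.inr a)},
          {L | L ∈ ({Lit.nneg (Sum.inl a)} : Set (Lit (NFAt α))) ∧ ¬ L.isNeg}⟩ :
            Rule (NFAt α)) ∈ reduct (freshP P) I := by
        refine ⟨⟨{Sum.inr (Sum.inr a)}, {Lit.nneg (Sum.inl a)}⟩,
          Or.inr ⟨a, ha, rfl⟩, ?_, rfl⟩
        rintro L hL _
        rw [Set.mem_singleton_iff] at hL
        subst hL
        exact hI
      have hpre : ∀ L ∈ {L | L ∈ ({Lit.nneg (Sum.inl a)} : Set (Lit (NFAt α))) ∧ ¬ L.isNeg},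
          L.sat J := by
        rintro L ⟨hL, hneg⟩
        rw [Set.mem_singleton_iff] at hL
        subst hL
        exact absurd trivial hneg
      obtain ⟨x, hx, hxJ⟩ := h _ hmem hpre
      rw [Set.mem_singleton_iff] at hx
      subst hx
      exact hxJ
  · rintro ⟨h1, h2⟩ r' hr'
    obtain ⟨r, hr, hcond, rfl⟩ := hr'
    rcases hr with ⟨a, ha, rfl⟩ | ⟨a, ha, rfl⟩
    · intro _
      refine ⟨Sum.inr (Sum.inl a), rfl, h1 a ha ?_⟩
      exact hcond (Lit.neg (Sum.inl a)) rfl trivial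
    · intro _
      refine ⟨Sum.inr (Sum.inr a), rfl, h2 a ha ?_⟩
      exact hcond (Lit.nneg (Sum.inl a)) rfl trivial

lemma SM_mapped_fresh (P : EProgram α) (Q : Program α) (I : Set (NFAt α)) :
    I ∈ SM (Rule.mapAtoms Sum.inl '' Q ∪ freshP P) ↔
      (I = extI P (restrI I) ∧ restrI I ∈ SM Q) := by
  constructor
  · rintro ⟨hM, hmin⟩
    rw [reduct_union, isModel_union] at hM
    obtain ⟨hMm, hMf⟩ := hM
    obtain ⟨hf1, hf2⟩ := (isModel_fresh_reduct P I I).mp hMf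
    -- minimality applied to the "coherent part" of I
    set J0 : Set (NFAt α) := I ∩ (extI P (restrI I) ∪ Set.range Sum.inl) with hJ0def
    have hres0 : restrI J0 = restrI I := by
      ext a
      constructor
      · rintro ⟨h, _⟩
        exact h
      · intro h
        exact ⟨h, Or.inr ⟨a, rfl⟩⟩
    have hJ0 : J0 = I := by
      apply hmin J0 Set.inter_subset_left
      rw [reduct_union, isModel_union]
      refine ⟨?_, ?_⟩
      · rw [isModel_mapped_reduct, hres0]
        exact (isModel_mapped_reduct Q I I).mp hMm
      · rw [isModel_fresh_reduct]
        constructor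
        · intro a ha hI
          exact ⟨hf1 a ha hI, Or.inl ⟨ha, hI⟩⟩
        · intro a ha hI
          exact ⟨hf2 a ha hI, Or.inl ⟨ha, hI⟩⟩
    have hcoh : I = extI P (restrI I) := by
      ext x
      cases x with
      | inl a => exact Iff.rfl
      | inr y =>
        cases y with
        | inl a =>
          constructor
          · intro hx
            have hx0 : Sum.inr (Sum.inl a) ∈ J0 := by rw [hJ0]; exact hx
            rcases hx0.2 with h | ⟨b, hb⟩
            · exact h
            · exact absurd hb (by simp)
          · rintro ⟨ha, hna⟩
            exact hf1 a ha hna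
        | inr a =>
          constructor
          · intro hx
            have hx0 : Sum.inr (Sum.inr a) ∈ J0 := by rw [hJ0]; exact hx
            rcases hx0.2 with h | ⟨b, hb⟩
            · exact h
            · exact absurd hb (by simp)
          · rintro ⟨ha, hna⟩
            exact hf2 a ha hna
    refine ⟨hcoh, (isModel_mapped_reduct Q I I).mp hMm, ?_⟩
    intro Jsub hsub hmod
    set J' : Set (NFAt α) := Sum.inl '' Jsub ∪ (I \ Set.range Sum.inl) with hJ'def
    have hresJ' : restrI J' = Jsub := by
      ext a
      constructor
      · rintro (⟨b, hb, hba⟩ | ⟨_, hr⟩)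
        · obtain rfl : b = a := Sum.inl_injective hba
          exact hb
        · exact absurd ⟨a, rfl⟩ hr
      · intro h
        exact Or.inl ⟨a, h, rfl⟩
    have hJ'I : J' ⊆ I := by
      rintro x (⟨a, ha, rfl⟩ | ⟨hx, _⟩)
      · exact hsub ha
      · exact hx
    have hJ' : J' = I := by
      apply hmin J' hJ'I
      rw [reduct_union, isModel_union]
      refine ⟨?_, ?_⟩
      · rw [isModel_mapped_reduct, hresJ']
        exact hmod
      · rw [isModel_fresh_reduct]
        constructor
        · intro a ha hI
          exact Or.inr ⟨hf1 a ha hI, by simp⟩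
        · intro a ha hI
          exact Or.inr ⟨hf2 a ha hI, by simp⟩
    have hfin2 := congrArg restrI hJ'
    rw [hresJ'] at hfin2
    exact hfin2
  · rintro ⟨hext, hKmod, hKmin⟩
    constructor
    · rw [reduct_union, isModel_union]
      refine ⟨(isModel_mapped_reduct Q I I).mpr hKmod, ?_⟩
      rw [isModel_fresh_reduct]
      constructor
      · intro a ha hI
        rw [hext]
        exact ⟨ha, hI⟩
      · intro a ha hI
        rw [hext]
        exact ⟨ha, hI⟩
    · intro J hJ hmod
      rw [reduct_union, isModel_union] at hmod
      obtain ⟨hmodm, hmodf⟩ := hmod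
      obtain ⟨hj1, hj2⟩ := (isModel_fresh_reduct P I J).mp hmodf
      have hsub : restrI J ⊆ restrI I := fun a ha => hJ ha
      have hres : restrI J = restrI I :=
        hKmin (restrI J) hsub ((isModel_mapped_reduct Q I J).mp hmodm)
      apply Set.Subset.antisymm hJ
      intro x hx
      rw [hext] at hx
      cases x with
      | inl a =>
        have : a ∈ restrI J := by rw [hres]; exact hx
        exact this
      | inr y =>
        cases y with
        | inl a => exact hj1 a hx.1 hx.2
        | inr a => exact hj2 a hx.1 hx.2

lemma satK_image (W : Set (Set (NFAt α))) (l : Lit α) :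
    satK (restrI '' W) l ↔ ∀ I ∈ W, l.sat (restrI I) := by
  unfold satK
  exact Set.forall_mem_image

lemma satK_inner (P : EProgram α) (W : Set (Set (NFAt α)))
    (hcoh : ∀ I ∈ W, I = extI P (restrI I)) (l : Lit α)
    (hocc1 : ∀ a, l = .neg a → negKOccurs P a)
    (hocc2 : ∀ a, l = .nneg a → nnegKOccurs P a) :
    satK W (innerNF l) ↔ satK (restrI '' W) l := by
  rw [satK_image]
  cases l with
  | pos a => exact Iff.rfl
  | top => exact Iff.rfl
  | bot => exact Iff.rfl
  | neg a =>
    have ha := hocc1 a rfl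
    constructor
    · intro h I hI
      have h' : Sum.inr (Sum.inl a) ∈ extI P (restrI I) := by
        rw [← hcoh I hI]
        exact h I hI
      exact h'.2
    · intro h I hI
      rw [hcoh I hI]
      exact ⟨ha, h I hI⟩
  | nneg a =>
    have ha := hocc2 a rfl
    constructor
    · intro h I hI
      have h' : Sum.inr (Sum.inr a) ∈ extI P (restrI I) := by
        rw [← hcoh I hI]
        exact h I hI
      exact h'.2
    · intro h I hI
      rw [hcoh I hI]
      exact ⟨ha, h I hI⟩

lemma gLit_eq (P : EProgram α) (W : Set (Set (NFAt α)))
    (hcoh : ∀ I ∈ W, I = extI P (restrI I))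
    {r : ERule α} (hr : r ∈ P) {L : SLit α} (hL : L ∈ r.body) :
    gLit W L = SLit.reduce (restrI '' W) L := by
  cases L with
  | obj l => rfl
  | k l =>
    simp only [gLit, SLit.reduce]
    rw [satK_inner P W hcoh l
      (fun a hl => ⟨r, hr, _, hL, Or.inl (by rw [hl])⟩)
      (fun a hl => ⟨r, hr, _, hL, Or.inl (by rw [hl])⟩)]
  | nk l =>
    simp only [gLit, SLit.reduce]
    rw [satK_inner P W hcoh l
      (fun a hl => ⟨r, hr, _, hL, Or.inr (Or.inl (by rw [hl]))⟩)
      (fun a hl => ⟨r, hr, _, hL, Or.inr (Or.inl (by rw [hl]))⟩)]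
  | nnk l =>
    simp only [gLit, SLit.reduce]
    rw [satK_inner P W hcoh l
      (fun a hl => ⟨r, hr, _, hL, Or.inr (Or.inr (by rw [hl]))⟩)
      (fun a hl => ⟨r, hr, _, hL, Or.inr (Or.inr (by rw [hl]))⟩)]

lemma QW_eq (P : EProgram α) (W : Set (Set (NFAt α)))
    (hcoh : ∀ I ∈ W, I = extI P (restrI I)) :
    QW P W = subjReduct P (restrI '' W) := by
  unfold QW subjReduct
  apply Set.image_congr
  intro r hr
  congr 1
  exact Set.image_congr fun L hL => gLit_eq P W hcoh hr hL

lemma wv_char (P : EProgram α) {W : Set (Set (NFAt α))}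
    (h : isWorldview (NF P) W) :
    isWorldview P (restrI '' W) ∧ W = extI P '' (restrI '' W) := by
  obtain ⟨hne, hfix⟩ := h
  have hcoh : ∀ I ∈ W, I = extI P (restrI I) := by
    intro I hI
    have hI' : I ∈ SM (subjReduct (NF P) W) := by rw [← hfix]; exact hI
    rw [subjReduct_NF] at hI'
    exact ((SM_mapped_fresh P _ I).mp hI').1
  have hQ : QW P W = subjReduct P (restrI '' W) := QW_eq P W hcoh
  have hSM : ∀ I : Set (NFAt α), I ∈ SM (subjReduct (NF P) W) ↔
      (I = extI P (restrI I) ∧ restrI I ∈ SM (subjReduct P (restrI '' W))) := by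
    intro I
    rw [subjReduct_NF, hQ, SM_mapped_fresh]
  have hVfix : SM (subjReduct P (restrI '' W)) = restrI '' W := by
    ext J
    constructor
    · intro hJ
      have hmem : extI P J ∈ SM (subjReduct (NF P) W) := by
        rw [hSM, restr_ext]
        exact ⟨rfl, hJ⟩
      rw [← hfix] at hmem
      exact ⟨extI P J, hmem, restr_ext P J⟩
    · rintro ⟨I, hI, rfl⟩
      have hI' : I ∈ SM (subjReduct (NF P) W) := by rw [← hfix]; exact hI
      exact ((hSM I).mp hI').2
  refine ⟨⟨hne.image _, hVfix.symm⟩, ?_⟩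
  ext I
  constructor
  · intro hI
    have hI' : I ∈ SM (subjReduct (NF P) W) := by rw [← hfix]; exact hI
    obtain ⟨hc, hm⟩ := (hSM I).mp hI'
    rw [hVfix] at hm
    exact ⟨restrI I, hm, hc.symm⟩
  · rintro ⟨J, ⟨I0, hI0, rfl⟩, rfl⟩
    rw [← hcoh I0 hI0]
    exact hI0

lemma wv_ext (P : EProgram α) {V : Set (Set α)} (h : isWorldview P V) :
    isWorldview (NF P) (extI P '' V) ∧ restrI '' (extI P '' V) = V := by
  have hre : restrI '' (extI P '' V) = V := by
    rw [Set.image_image]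
    calc (fun J => restrI (extI P J)) '' V = id '' V :=
          Set.image_congr fun J _ => restr_ext P J
      _ = V := Set.image_id V
  obtain ⟨hne, hfix⟩ := h
  have hcoh : ∀ I ∈ extI P '' V, I = extI P (restrI I) := by
    rintro I ⟨J, hJ, rfl⟩
    rw [restr_ext]
  have hQ : QW P (extI P '' V) = subjReduct P V := by
    rw [QW_eq P _ hcoh, hre]
  refine ⟨⟨hne.image _, ?_⟩, hre⟩
  rw [subjReduct_NF, hQ]
  ext I
  rw [SM_mapped_fresh, ← hfix]
  constructor
  · rintro ⟨J, hJ, rfl⟩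
    rw [restr_ext]
    exact ⟨rfl, hJ⟩
  · rintro ⟨hc, hm⟩
    exact ⟨restrI I, hm, hc.symm⟩

end NFAux

/-- one-to-one correspondence between worldviews of `Π` and of
`NF(Π)`: `W` is a worldview of `NF(Π)` iff its restriction to `At(Π)` is a
worldview of `Π` (each worldview of `Π` arising from exactly one worldview of
`NF(Π)`), and restriction is injective on worldviews of `NF(Π)`. -/
theorem normal_form_correspondence {α : Type} (P : EProgram α) (hfin : P.Finite) :
    (∀ W : Set (Set (NFAt α)), isWorldview (NF P) W → isWorldview P (restrNF W))
    ∧ (∀ V : Set (Set α), isWorldview P V →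
        ∃! W : Set (Set (NFAt α)), isWorldview (NF P) W ∧ restrNF W = V)
    ∧ Set.InjOn restrNF { W | isWorldview (NF P) W } := by
  refine ⟨?_, ?_, ?_⟩
  · intro W hW
    rw [restrNF_eq]
    exact (wv_char P hW).1
  · intro V hV
    refine ⟨extI P '' V, ⟨(wv_ext P hV).1, ?_⟩, ?_⟩
    · rw [restrNF_eq]
      exact (wv_ext P hV).2
    rintro W ⟨hW, hres⟩
    have h2 := (wv_char P hW).2
    rw [← restrNF_eq, hres] at h2
    exact h2
  · intro W1 h1 W2 h2 heq
    rw [(wv_char P h1).2, (wv_char P h2).2, ← restrNF_eq, ← restrNF_eq, heq]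
end
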